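/- In a plane-oriented recursive tree on n ≥ 2 nodes, the variance of the degree of node j (for fixed 1 ≤ j ≤ n) is Var[D_{n,j}] = −Γ²(n)Γ²(j−1/2)/(Γ²(n−1/2)Γ²(j)) − Γ(n)Γ(j−1/2)/(Γ(n−1/2)Γ(j)) + (4n−2)/(2j−1). -/

import Mathlib

set_option maxHeartbeats 1000000 in
/-- Variance of the degree of node `j` in a PORT on `n ≥ 2` nodes.  `e m` and `s m`
denote the first and second moments of `D_{m,j}`.  Node `j` enters with degree 1 at
time `max j 2`; at time `m` node `j` of degree `d` is chosen with probability
`(d + δ_{j,1})/(2m-3)` (the root carries one extra insertion position), whence the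
moment recurrences below.  Then
`Var[D_{n,j}] = −Γ²(n)Γ²(j−1/2)/(Γ²(n−1/2)Γ²(j)) − Γ(n)Γ(j−1/2)/(Γ(n−1/2)Γ(j))
+ (4n−2)/(2j−1)`. -/
theorem port_degree_variance (j n : ℕ) (hj : 1 ≤ j) (hjn : j ≤ n) (hn : 2 ≤ n)
    (e s : ℕ → ℝ) (hinite : e (max j 2) = 1) (hinits : s (max j 2) = 1)
    (hrece : ∀ m : ℕ, max j 2 < m →
      e m = e (m - 1) + (e (m - 1) + (if j = 1 then 1 else 0)) / (2 * (m : ℝ) - 3))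
    (hrecs : ∀ m : ℕ, max j 2 < m →
      s m = s (m - 1) +
        (2 * s (m - 1) + (if j = 1 then 3 else 1) * e (m - 1) + (if j = 1 then 1 else 0)) /
          (2 * (m : ℝ) - 3)) :
    s n - (e n) ^ 2 =
      -(Real.Gamma (n : ℝ)) ^ 2 * (Real.Gamma ((j : ℝ) - 1 / 2)) ^ 2 /
          ((Real.Gamma ((n : ℝ) - 1 / 2)) ^ 2 * (Real.Gamma (j : ℝ)) ^ 2) -
        Real.Gamma (n : ℝ) * Real.Gamma ((j : ℝ) - 1 / 2) /
          (Real.Gamma ((n : ℝ) - 1 / 2) * Real.Gamma (j : ℝ)) +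
        (4 * (n : ℝ) - 2) / (2 * (j : ℝ) - 1) := by
  have hj1 : (1:ℝ) ≤ (j:ℝ) := by exact_mod_cast hj
  have hn2 : (2:ℝ) ≤ (n:ℝ) := by exact_mod_cast hn
  have hΓj : (0:ℝ) < Real.Gamma (j:ℝ) := Real.Gamma_pos_of_pos (by linarith)
  have hΓj' : (0:ℝ) < Real.Gamma ((j:ℝ) - 1/2) := Real.Gamma_pos_of_pos (by linarith)
  have hΓn' : (0:ℝ) < Real.Gamma ((n:ℝ) - 1/2) := Real.Gamma_pos_of_pos (by linarith)
  have hjR : (2:ℝ) * (j:ℝ) - 1 ≠ 0 := by nlinarith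
  set c : ℝ := if j = 1 then 1 else 0 with hc
  have hc01 : c = 0 ∨ c = 1 := by
    by_cases h : j = 1 <;> simp [hc, h]
  have hc3 : (if j = 1 then (3:ℝ) else 1) = 1 + 2 * c := by
    by_cases h : j = 1 <;> norm_num [hc, h]
  set g : ℕ → ℝ := fun m => Real.Gamma (m:ℝ) * Real.Gamma ((j:ℝ) - 1/2) /
      (Real.Gamma ((m:ℝ) - 1/2) * Real.Gamma (j:ℝ)) with hgdef
  set k := max j 2 with hk
  have hk2 : 2 ≤ k := le_max_right _ _
  have hgk : g k = 1 + c := by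
    rcases eq_or_ne j 1 with h | h
    · have hk1 : k = 2 := by simp [hk, h]
      have hc1 : c = 1 := by simp [hc, h]
      rw [hk1, hc1]
      simp only [hgdef]
      subst h
      have h32 : ((2:ℕ):ℝ) - 1/2 = 1/2 + 1 := by norm_num
      have h12 : ((1:ℕ):ℝ) - 1/2 = 1/2 := by norm_num
      rw [h32, h12, Real.Gamma_add_one (by norm_num), Real.Gamma_one_half_eq]
      have h2 : ((2:ℕ):ℝ) = 2 := by norm_num
      have h1 : ((1:ℕ):ℝ) = 1 := by norm_num
      rw [h2, h1, Real.Gamma_two, Real.Gamma_one]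
      have hs : Real.sqrt Real.pi ≠ 0 := by positivity
      field_simp
      ring
    · have hkj : k = j := by rw [hk]; exact max_eq_left (by omega)
      have hc0 : c = 0 := by simp [hc, h]
      rw [hkj, hc0]
      simp only [hgdef]
      rw [mul_comm (Real.Gamma ((j:ℝ) - 1/2))]
      rw [div_self (by positivity)]
      ring
  have hstep : ∀ m : ℕ, 2 ≤ m → g (m+1) = g m * (2*(m:ℝ)) / (2*(m:ℝ) - 1) := by
    intro m hm
    have hm2 : (2:ℝ) ≤ (m:ℝ) := by exact_mod_cast hm
    have h1 : Real.Gamma ((m:ℝ)+1) = (m:ℝ) * Real.Gamma (m:ℝ) :=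
      Real.Gamma_add_one (by linarith)
    have h2 : Real.Gamma ((m:ℝ)+1 - 1/2) = ((m:ℝ)-1/2) * Real.Gamma ((m:ℝ)-1/2) := by
      have h3 : (m:ℝ)+1-1/2 = ((m:ℝ)-1/2)+1 := by ring
      rw [h3, Real.Gamma_add_one (by linarith)]
    have hΓm : (0:ℝ) < Real.Gamma ((m:ℝ)-1/2) := Real.Gamma_pos_of_pos (by linarith)
    have hΓmne : Real.Gamma ((m:ℝ)-1/2) ≠ 0 := ne_of_gt hΓm
    have hΓjne : Real.Gamma ((j:ℝ)) ≠ 0 := ne_of_gt hΓj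
    have hd1 : (m:ℝ) - 1/2 ≠ 0 := by linarith
    have hd2 : (2:ℝ)*(m:ℝ) - 1 ≠ 0 := by nlinarith
    simp only [hgdef]
    push_cast
    rw [h1, h2]
    field_simp
  have hkn : k ≤ n := max_le hjn hn
  clear_value c g k
  have key : ∀ m : ℕ, k ≤ m → e m = g m - c ∧
      s m = (4*(m:ℝ) - 2)/(2*(j:ℝ) - 1) + c - (1+2*c) * g m := by
    intro m hm
    induction m, hm using Nat.le_induction with
    | base =>
      have hA : (4*(k:ℝ)-2)/(2*(j:ℝ)-1) = 2 + 4*c := by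
        rcases eq_or_ne j 1 with h|h
        · have hk1 : k = 2 := by simp [hk, h]
          have hc1 : c = 1 := by simp [hc, h]
          rw [hk1, hc1]
          subst h
          norm_num
        · have hkj : k = j := by rw [hk]; exact max_eq_left (by omega)
          have hc0 : c = 0 := by simp [hc, h]
          rw [hkj, hc0]
          rw [div_eq_iff hjR]
          ring
      constructor
      · rw [hinite, hgk]; ring
      · rw [hinits, hgk, hA]
        rcases hc01 with h|h <;> rw [h] <;> ring
    | succ m hm ih =>
      have h2m : 2 ≤ m := le_trans hk2 hm
      have hm2 : (2:ℝ) ≤ (m:ℝ) := by exact_mod_cast h2m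
      have hD : (2:ℝ)*(m:ℝ) - 1 ≠ 0 := by nlinarith
      obtain ⟨ihe, ihs⟩ := ih
      have hge := hstep m h2m
      have he1 := hrece (m+1) (by omega)
      have hs1 := hrecs (m+1) (by omega)
      simp only [Nat.add_sub_cancel] at he1 hs1
      rw [hc3] at hs1
      push_cast at he1 hs1
      rw [ihe] at he1 hs1
      rw [ihs] at hs1
      have hDD : 2*((m:ℝ)+1) - 3 = 2*(m:ℝ) - 1 := by ring
      rw [hDD] at he1 hs1
      constructor
      · rw [he1, hge]
        field_simp [hD]
        ring
      · rw [hs1, hge]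
        push_cast
        rcases hc01 with h|h <;> rw [h] <;> field_simp [hD, hjR, show (m:ℝ)*2 - 1 ≠ 0 by linarith] <;> ring
  obtain ⟨he, hs⟩ := key n hkn
  rw [he, hs]
  simp only [hgdef]
  have hΓnne : Real.Gamma ((n:ℝ) - 1/2) ≠ 0 := ne_of_gt hΓn'
  have hΓjne : Real.Gamma ((j:ℝ)) ≠ 0 := ne_of_gt hΓj
  rcases hc01 with h|h <;> rw [h] <;> field_simp [hΓnne, hΓjne, hjR, show Real.Gamma (((n:ℝ)*2 - 1)/2) ≠ 0 by rw [show ((n:ℝ)*2 - 1)/2 = (n:ℝ) - 1/2 by ring]; exact hΓnne] <;> ring
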